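/- Let β ∈ ℂ with Re(β) > 0 and Im(β) ≥ 0, let ε > 0, k ∈ ℕ, n ∈ ℕ with n ≥ 1, and t > exp^∘k(0) with M_{ε,k}(t) < Re(β). Let h : [t,∞) → ℝ be of class C^n, nondecreasing, with h^{(n)} nondecreasing on [t,∞), and suppose there exists ρ with 0 < ρ < Re(β) − M_{ε,k}(t) such that Σ_{i=1}^{n} (h^{(i)}(x)/i!)·ρ^i ≥ Im(β) + M_{ε,k}(x) for all x ≥ t. Then h(x + Re(β) − M_{ε,k}(x)) − h(x) ≥ Im(β) + M_{ε,k}(x) for all x ≥ t (i.e. h is an upper map of type (β,ε,k)). -/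

import Mathlib

open Filter Set

/-- `M_{ε,k}(x) = (∏_{j=0}^{k-1} log^∘j(x))⁻¹ · (log^∘k(x))^{-(1+ε)}`. -/
noncomputable def Mfun (ε : ℝ) (k : ℕ) (x : ℝ) : ℝ :=
  (∏ j ∈ Finset.range k, Real.log^[j] x)⁻¹ * (Real.log^[k] x) ^ (-(1 + ε))

lemma expIter_nonneg (m : ℕ) : 0 ≤ Real.exp^[m] 0 := by
  cases m with
  | zero => simp
  | succ m => rw [Function.iterate_succ_apply']; exact (Real.exp_pos _).le

/-- key: `exp^[k-j] 0 < log^[j] x` for `j ≤ k` and `x > exp^[k] 0`. -/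
lemma logIter_lt {k : ℕ} {x : ℝ} (hx : Real.exp^[k] 0 < x) :
    ∀ j, j ≤ k → Real.exp^[k - j] 0 < Real.log^[j] x := by
  intro j
  induction j with
  | zero => intro _; simpa using hx
  | succ j ih =>
    intro hjk
    have hj : j ≤ k := Nat.le_of_succ_le hjk
    have h1 := ih hj
    have hkj : k - j = (k - (j + 1)) + 1 := by omega
    rw [hkj, Function.iterate_succ_apply'] at h1
    have h2 : 0 < Real.exp (Real.exp^[k - (j+1)] 0) := Real.exp_pos _
    rw [Function.iterate_succ_apply']
    calc Real.exp^[k - (j+1)] 0 = Real.log (Real.exp (Real.exp^[k - (j+1)] 0)) :=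
          (Real.log_exp _).symm
      _ < Real.log (Real.log^[j] x) := Real.log_lt_log h2 h1

lemma logIter_pos {k : ℕ} {x : ℝ} (hx : Real.exp^[k] 0 < x) {j : ℕ} (hj : j ≤ k) :
    0 < Real.log^[j] x :=
  lt_of_le_of_lt (expIter_nonneg _) (logIter_lt hx j hj)

lemma logIter_mono {k : ℕ} {x y : ℝ} (hx : Real.exp^[k] 0 < x) (hxy : x ≤ y) :
    ∀ j, j ≤ k → Real.log^[j] x ≤ Real.log^[j] y := by
  intro j
  induction j with
  | zero => intro _; simpa using hxy
  | succ j ih =>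
    intro hjk
    have hj : j ≤ k := Nat.le_of_succ_le hjk
    rw [Function.iterate_succ_apply', Function.iterate_succ_apply']
    exact Real.log_le_log (logIter_pos hx hj) (ih hj)

lemma Mfun_pos {ε : ℝ} {k : ℕ} {x : ℝ} (hx : Real.exp^[k] 0 < x) : 0 < Mfun ε k x := by
  apply mul_pos
  · refine inv_pos.mpr (Finset.prod_pos fun j hj => ?_)
    exact logIter_pos hx (Finset.mem_range.mp hj).le
  · exact Real.rpow_pos_of_pos (logIter_pos hx le_rfl) _

lemma Mfun_anti {ε : ℝ} (hε : 0 < ε) {k : ℕ} {x y : ℝ} (hx : Real.exp^[k] 0 < x)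
    (hxy : x ≤ y) : Mfun ε k y ≤ Mfun ε k x := by
  have hy : Real.exp^[k] 0 < y := lt_of_lt_of_le hx hxy
  unfold Mfun
  have hPx : 0 < ∏ j ∈ Finset.range k, Real.log^[j] x :=
    Finset.prod_pos fun j hj => logIter_pos hx (Finset.mem_range.mp hj).le
  have hP : (∏ j ∈ Finset.range k, Real.log^[j] x) ≤ ∏ j ∈ Finset.range k, Real.log^[j] y := by
    refine Finset.prod_le_prod (fun j hj => (logIter_pos hx (Finset.mem_range.mp hj).le).le)
      (fun j hj => logIter_mono hx hxy j (Finset.mem_range.mp hj).le)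
  have h1 : (∏ j ∈ Finset.range k, Real.log^[j] y)⁻¹ ≤
      (∏ j ∈ Finset.range k, Real.log^[j] x)⁻¹ := by
    exact inv_anti₀ hPx hP
  have h2 : (Real.log^[k] y) ^ (-(1 + ε)) ≤ (Real.log^[k] x) ^ (-(1 + ε)) :=
    Real.rpow_le_rpow_of_nonpos (logIter_pos hx le_rfl)
      (logIter_mono hx hxy k le_rfl) (by linarith)
  have h3 : 0 ≤ (Real.log^[k] y) ^ (-(1 + ε)) :=
    (Real.rpow_pos_of_pos (logIter_pos hy le_rfl) _).le
  have h4 : 0 ≤ (∏ j ∈ Finset.range k, Real.log^[j] x)⁻¹ := (inv_pos.mpr hPx).le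
  exact mul_le_mul h1 h2 h3 h4

/-- Iterated derivatives within `Icc x y` agree with those within `Ici t`. -/
lemma iterDeriv_Icc_eq_Ici {n : ℕ} {h : ℝ → ℝ} {t x y : ℝ}
    (hC : ContDiffOn ℝ n h (Set.Ici t)) (hx : t ≤ x) (hxy : x < y)
    {i : ℕ} (hi : i ≤ n) {z : ℝ} (hz : z ∈ Set.Icc x y) :
    iteratedDerivWithin i h (Set.Icc x y) z = iteratedDerivWithin i h (Set.Ici t) z := by
  have hsub : Set.Icc x y ⊆ Set.Ici t := fun w hw => le_trans hx hw.1
  have H := (hC.ftaylorSeriesWithin (uniqueDiffOn_Ici t)).mono hsub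
  have := H.eq_iteratedFDerivWithin_of_uniqueDiffOn (m := i)
    (by exact_mod_cast hi) (uniqueDiffOn_Icc hxy) hz
  rw [iteratedDerivWithin_eq_iteratedFDerivWithin, iteratedDerivWithin_eq_iteratedFDerivWithin,
    ← this]
  rfl

theorem upper_map_sufficient_condition
    (β : ℂ) (hβre : 0 < β.re) (hβim : 0 ≤ β.im)
    (ε : ℝ) (hε : 0 < ε) (k : ℕ) (n : ℕ) (hn : 1 ≤ n)
    (t : ℝ) (ht : Real.exp^[k] 0 < t) (hMt : Mfun ε k t < β.re)
    (h : ℝ → ℝ) (hC : ContDiffOn ℝ n h (Set.Ici t))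
    (hmono : MonotoneOn h (Set.Ici t))
    (hdn : MonotoneOn (iteratedDerivWithin n h (Set.Ici t)) (Set.Ici t))
    (ρ : ℝ) (hρ0 : 0 < ρ) (hρ : ρ < β.re - Mfun ε k t)
    (hsum : ∀ x, t ≤ x →
      β.im + Mfun ε k x ≤
        ∑ i ∈ Finset.Icc 1 n, (iteratedDerivWithin i h (Set.Ici t) x / (i.factorial : ℝ)) * ρ ^ i) :
    ∀ x, t ≤ x → β.im + Mfun ε k x ≤ h (x + (β.re - Mfun ε k x)) - h x := by
  intro x hx
  set y := x + ρ with hy_def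
  have hxy : x < y := by simp [hy_def, hρ0]
  have hxt : Real.exp^[k] 0 < x := lt_of_lt_of_le ht hx
  have hMx : Mfun ε k x ≤ Mfun ε k t := Mfun_anti hε ht hx
  have hyle : y ≤ x + (β.re - Mfun ε k x) := by
    have : ρ ≤ β.re - Mfun ε k x := by linarith
    simpa [hy_def] using this
  -- Taylor's theorem on [x, y] with m = n - 1
  obtain ⟨m, rfl⟩ : ∃ m, n = m + 1 := ⟨n - 1, by omega⟩
  have hsub : Set.Icc x y ⊆ Set.Ici t := fun w hw => le_trans hx hw.1
  have hCIcc : ContDiffOn ℝ (m + 1) h (Set.Icc x y) := hC.mono hsub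
  have hCm : ContDiffOn ℝ m h (Set.Icc x y) :=
    hCIcc.of_le (by exact_mod_cast Nat.le_succ m)
  have hdiff : DifferentiableOn ℝ (iteratedDerivWithin m h (Set.Icc x y)) (Set.Ioo x y) :=
    (hCIcc.differentiableOn_iteratedDerivWithin (by exact_mod_cast Nat.lt_succ_self m)
      (uniqueDiffOn_Icc hxy)).mono Set.Ioo_subset_Icc_self
  obtain ⟨x', hx', htaylor⟩ := taylor_mean_remainder_lagrange hxy.ne
    (by rwa [Set.uIcc_of_le hxy.le]) (by rwa [Set.uIcc_of_le hxy.le, Set.uIoo_of_lt hxy])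
  rw [Set.uIoo_of_lt hxy] at hx'
  rw [Set.uIcc_of_le hxy.le] at htaylor
  -- rewrite the Taylor polynomial
  rw [taylor_within_apply] at htaylor
  -- convert the remainder derivative
  have hx'mem : x' ∈ Set.Icc x y := Set.Ioo_subset_Icc_self hx'
  have hrem : iteratedDerivWithin (m + 1) h (Set.Icc x y) x'
      = iteratedDerivWithin (m + 1) h (Set.Ici t) x' := by
    exact iterDeriv_Icc_eq_Ici hC hx hxy le_rfl hx'mem
  -- monotonicity of the n-th derivative
  have hDnx : iteratedDerivWithin (m + 1) h (Set.Ici t) x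
      ≤ iteratedDerivWithin (m + 1) h (Set.Ici t) x' := by
    apply hdn (by exact hx) (hsub hx'mem) hx'.1.le
  -- Each D_i on Icc equals D_i on Ici t at x
  have hxmem : x ∈ Set.Icc x y := Set.left_mem_Icc.mpr hxy.le
  have hDeq : ∀ i ∈ Finset.range (m + 1),
      iteratedDerivWithin i h (Set.Icc x y) x = iteratedDerivWithin i h (Set.Ici t) x := by
    intro i hi
    exact iterDeriv_Icc_eq_Ici hC hx hxy
      (le_trans (Nat.le_of_lt_succ (Finset.mem_range.mp hi)) (Nat.le_succ m)) hxmem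
  -- assemble
  have hyx : y - x = ρ := by simp [hy_def]
  have key : h y - h x ≥
      ∑ i ∈ Finset.Icc 1 (m + 1),
        (iteratedDerivWithin i h (Set.Ici t) x / (i.factorial : ℝ)) * ρ ^ i := by
    have hsum_eq : ∑ i ∈ Finset.range (m + 1),
        (((i.factorial : ℝ))⁻¹ * (y - x) ^ i) • iteratedDerivWithin i h (Set.Icc x y) x
        = h x + ∑ i ∈ Finset.range m,
            (iteratedDerivWithin (i+1) h (Set.Ici t) x / ((i+1).factorial : ℝ)) * ρ ^ (i+1) := by
      rw [Finset.sum_range_succ']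
      simp only [hyx]
      rw [add_comm]
      congr 1
      · simp
      · refine Finset.sum_congr rfl fun i hi => ?_
        rw [hDeq (i+1) (Finset.mem_range.mpr (Nat.succ_lt_succ (Finset.mem_range.mp hi)))]
        simp [smul_eq_mul]
        ring
    have hIcc_split : ∑ i ∈ Finset.Icc 1 (m + 1),
        (iteratedDerivWithin i h (Set.Ici t) x / (i.factorial : ℝ)) * ρ ^ i
        = (∑ i ∈ Finset.range m,
            (iteratedDerivWithin (i+1) h (Set.Ici t) x / ((i+1).factorial : ℝ)) * ρ ^ (i+1))
          + (iteratedDerivWithin (m+1) h (Set.Ici t) x / ((m+1).factorial : ℝ)) * ρ ^ (m+1) := by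
      rw [show Finset.Icc 1 (m+1) = Finset.Ico 1 (m+2) by rfl, Finset.sum_Ico_eq_sum_range]
      simp only [show m + 2 - 1 = m + 1 from rfl]
      rw [Finset.sum_range_succ]
      congr 1
      · refine Finset.sum_congr rfl fun i hi => ?_
        congr 1 <;> rw [add_comm 1 i]
      · rw [add_comm 1 m]
    have hrempos : 0 ≤ ρ ^ (m+1) / ((m+1).factorial : ℝ) :=
      div_nonneg (pow_nonneg hρ0.le _) (Nat.cast_nonneg _)
    have hrem_ge : iteratedDerivWithin (m+1) h (Set.Ici t) x * ρ ^ (m+1) / ((m+1).factorial : ℝ)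
        ≤ iteratedDerivWithin (m + 1) h (Set.Icc x y) x' * (y - x) ^ (m + 1)
          / ((m+1).factorial : ℝ) := by
      rw [hrem, hyx]
      apply div_le_div_of_nonneg_right ?_ (by positivity)
      · exact mul_le_mul_of_nonneg_right hDnx (pow_nonneg hρ0.le _)
    rw [hIcc_split]
    have := htaylor
    rw [hsum_eq] at this
    have hyval : h y = h x + (∑ i ∈ Finset.range m,
        (iteratedDerivWithin (i+1) h (Set.Ici t) x / ((i+1).factorial : ℝ)) * ρ ^ (i+1))
        + iteratedDerivWithin (m + 1) h (Set.Icc x y) x' * (y - x) ^ (m + 1)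
          / ((m+1).factorial : ℝ) := by
      have : h y - (h x + ∑ i ∈ Finset.range m,
          (iteratedDerivWithin (i+1) h (Set.Ici t) x / ((i+1).factorial : ℝ)) * ρ ^ (i+1))
          = iteratedDerivWithin (m + 1) h (Set.Icc x y) x' * (y - x) ^ (m + 1)
            / ((m+1).factorial : ℝ) := by
        simpa using this
      linarith
    have hfinal := hrem_ge
    rw [hyval]
    have : iteratedDerivWithin (m+1) h (Set.Ici t) x / ((m+1).factorial : ℝ) * ρ ^ (m+1)
        = iteratedDerivWithin (m+1) h (Set.Ici t) x * ρ ^ (m+1) / ((m+1).factorial : ℝ) := by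
      ring
    linarith [hrem_ge]
  have hmono_final : h y ≤ h (x + (β.re - Mfun ε k x)) := by
    apply hmono (show y ∈ Set.Ici t from le_trans hx (by linarith)) ?_ hyle
    have : (0:ℝ) < β.re - Mfun ε k x := by linarith
    exact le_trans hx (by linarith)
  calc β.im + Mfun ε k x
      ≤ ∑ i ∈ Finset.Icc 1 (m+1),
          (iteratedDerivWithin i h (Set.Ici t) x / (i.factorial : ℝ)) * ρ ^ i := hsum x hx
    _ ≤ h y - h x := key
    _ ≤ h (x + (β.re - Mfun ε k x)) - h x := by linarith
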